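/- Let a, b, λ, ε be real numbers with λ > 0, b < 0, and let θ > 0, ε ∈ (0, θ). For natural numbers i, j ≥ 1 with |i/j − θ| ≤ ε, the quantity E = (a·i + b·j + λ)/i satisfies |E − θ| < |b|·ε/(θ·(θ − ε)) + λ/i, provided a + b/θ = θ (i.e. θ is a root of X² − aX − b). -/

import Mathlib

set_option maxHeartbeats 1000000 in
theorem mean_ratio_close (a b lam θ ε : ℝ) (hlam : 0 < lam) (hb : b < 0)
    (hθ : 0 < θ) (hε0 : 0 < ε) (hεθ : ε < θ)
    (hroot : a + b / θ = θ) (i j : ℕ) (hi : 1 ≤ i) (hj : 1 ≤ j)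
    (hij : |(i : ℝ) / (j : ℝ) - θ| ≤ ε) :
    |(a * i + b * j + lam) / i - θ| < |b| * ε / (θ * (θ - ε)) + lam / i := by
  have hI : (1:ℝ) ≤ (i:ℝ) := by exact_mod_cast hi
  have hJ : (1:ℝ) ≤ (j:ℝ) := by exact_mod_cast hj
  have hI0 : (0:ℝ) < (i:ℝ) := by linarith
  have hJ0 : (0:ℝ) < (j:ℝ) := by linarith
  have hθε : 0 < θ - ε := by linarith
  have habs := abs_le.mp hij
  have hIJ : (i:ℝ)/(j:ℝ) * j = i := div_mul_cancel₀ _ (ne_of_gt hJ0)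
  have h1 : (θ - ε) * j ≤ i := by nlinarith [habs.1]
  have h2 : (i:ℝ) ≤ (θ + ε) * j := by nlinarith [habs.2]
  have hθ0 : θ ≠ 0 := ne_of_gt hθ
  have hb' : 0 < -b := by linarith
  have ha : a * θ = θ * θ - b := by
    field_simp at hroot; linarith
  have hE : (a * i + b * j + lam)/i - θ = (b*(θ*j - i) + lam*θ)/((i:ℝ)*θ) := by
    field_simp
    linear_combination (i:ℝ) * ha
  have hRHS : (-b)*ε/(θ*(θ-ε)) + lam/(i:ℝ)
      = ((-b)*ε*(i:ℝ) + lam*θ*(θ-ε))/((i:ℝ)*θ*(θ-ε)) := by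
    field_simp
  rw [abs_of_neg hb, hE, hRHS, abs_div, abs_of_pos (mul_pos hI0 hθ),
    div_lt_div_iff₀ (mul_pos hI0 hθ) (by positivity)]
  have hIθ : 0 < (i:ℝ)*θ := mul_pos hI0 hθ
  clear habs hIJ hroot hi hj hij
  rcases le_or_gt (θ*(j:ℝ) - i) 0 with hD | hD <;>
    rcases abs_cases (b*(θ*(j:ℝ) - i) + lam*θ) with ⟨he, hs⟩ | ⟨he, hs⟩ <;> rw [he]
  · -- D ≤ 0, X ≥ 0 : need b*D*(θ-ε) < -b*ε*I
    have h3 : θ*(j:ℝ) ≤ i := by linarith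
    have hbD : b*(θ*(j:ℝ) - i) ≤ (-b)*ε*j := by nlinarith
    have t1 : b*(θ*(j:ℝ) - i)*(θ-ε) ≤ (-b)*ε*j*(θ-ε) :=
      mul_le_mul_of_nonneg_right hbD hθε.le
    have t2 : (-b)*ε*(θ*(j:ℝ)) ≤ (-b)*ε*i :=
      mul_le_mul_of_nonneg_left h3 (mul_pos hb' hε0).le
    have t3 : 0 < (-b)*ε*(ε*(j:ℝ)) := by positivity
    have hkey : b*(θ*(j:ℝ) - i)*(θ-ε) < (-b)*ε*i := by nlinarith [t1, t2, t3]
    nlinarith [mul_pos hIθ (sub_pos.mpr hkey)]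
  · -- D ≤ 0, X < 0
    have hbD : b*(θ*(j:ℝ) - i) ≥ 0 := by nlinarith
    have hkey : -(b*(θ*(j:ℝ) - i) + lam*θ)*(θ-ε) < (-b)*ε*i + lam*θ*(θ-ε) := by
      nlinarith [mul_pos (mul_pos hb' hε0) hI0, mul_pos (mul_pos hlam hθ) hθε,
        mul_le_mul_of_nonneg_right hbD hθε.le]
    nlinarith [mul_pos hIθ (sub_pos.mpr hkey)]
  · -- D > 0, X ≥ 0 : b*D < 0
    have hkey : b*(θ*(j:ℝ) - i)*(θ-ε) < (-b)*ε*i := by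
      nlinarith [mul_pos (mul_pos hb' hD) hθε, mul_pos (mul_pos hb' hε0) hI0]
    nlinarith [mul_pos hIθ (sub_pos.mpr hkey)]
  · -- D > 0, X < 0 : D ≤ ε*J, -b*D*(θ-ε) ≤ -b*ε*I
    have hD2 : θ*(j:ℝ) - i ≤ ε*j := by nlinarith
    have t1 : (-b)*(θ*(j:ℝ) - i)*(θ-ε) ≤ (-b)*(ε*j)*(θ-ε) :=
      mul_le_mul_of_nonneg_right (mul_le_mul_of_nonneg_left hD2 hb'.le) hθε.le
    have t2 : (-b)*ε*((θ-ε)*(j:ℝ)) ≤ (-b)*ε*i :=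
      mul_le_mul_of_nonneg_left h1 (mul_pos hb' hε0).le
    have t3 : 0 < lam*θ*(θ-ε) := by positivity
    have hkey : -(b*(θ*(j:ℝ) - i) + lam*θ)*(θ-ε) < (-b)*ε*i + lam*θ*(θ-ε) := by
      nlinarith [t1, t2, t3]
    nlinarith [mul_pos hIθ (sub_pos.mpr hkey)]
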